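/- Let A be a complex power nonnegative matrix such that A^m is nonnegative and irreducible for some m ≥ ν(A), and let λ₁ be the eigenvalue of A with |λ₁| = ρ(A) possessing a positive eigenvector. Then for every y ∈ C^n, (1/k)·λ₁^{-k}·A^k·y → 0 as k → ∞. -/

import Mathlib

open ComplexOrder

open Matrix Complex Filter Topology

noncomputable def specRad {n : ℕ} (A : Matrix (Fin n) (Fin n) ℂ) : ℝ :=
  sSup ((fun z : ℂ => ‖z‖) '' spectrum ℂ A)

def MatIrred {n : ℕ} (A : Matrix (Fin n) (Fin n) ℂ) : Prop :=
  ∀ S : Set (Fin n), S.Nonempty → S ≠ Set.univ → ∃ i ∈ S, ∃ j ∉ S, A i j ≠ 0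

theorem stmt_8 {n : ℕ} (A : Matrix (Fin n) (Fin n) ℂ) (m : ℕ) (hm : 1 ≤ m)
    (hnonneg : ∀ i j, 0 ≤ (A ^ m) i j) (hirr : MatIrred (A ^ m))
    (lam : ℂ) (hlam : lam ∈ spectrum ℂ A) (hmod : ‖lam‖ = specRad A)
    (x : Fin n → ℝ) (hx : ∀ i, 0 < x i)
    (hev : A.mulVec (fun i => (x i : ℂ)) = lam • (fun i => (x i : ℂ))) :
    ∀ y : Fin n → ℂ,
      Tendsto (fun k : ℕ => ((k : ℂ))⁻¹ • (lam ^ k)⁻¹ • ((A ^ k).mulVec y))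
        atTop (𝓝 0) := by
  intro y
  rcases Nat.eq_zero_or_pos n with hn | hn
  · subst hn
    have h0 : (fun _ : ℕ => (0 : Fin 0 → ℂ)) =
        fun k : ℕ => ((k : ℂ))⁻¹ • (lam ^ k)⁻¹ • ((A ^ k).mulVec y) := by
      funext k; exact Subsingleton.elim _ _
    rw [← h0]; exact tendsto_const_nhds
  by_cases hlam0 : lam = 0
  · subst hlam0
    have h0 : (fun _ : ℕ => (0 : Fin n → ℂ)) =ᶠ[atTop]
        fun k : ℕ => ((k : ℂ))⁻¹ • ((0 : ℂ) ^ k)⁻¹ • ((A ^ k).mulVec y) := by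
      filter_upwards [eventually_ge_atTop 1] with k hk
      rw [zero_pow (by omega : k ≠ 0)]
      simp
    exact Tendsto.congr' h0 tendsto_const_nhds
  -- main case
  set xC : Fin n → ℂ := fun i => (x i : ℂ) with hxC
  set L : ℝ := ‖lam‖ with hLdef
  have hL : 0 < L := norm_pos_iff.mpr hlam0
  -- powers act on the eigenvector
  have hpow : ∀ k : ℕ, (A ^ k).mulVec xC = (lam ^ k) • xC := by
    intro k
    induction k with
    | zero => simp
    | succ k ih =>
      have : A ^ (k + 1) = A * A ^ k := by rw [pow_succ']
      rw [this, ← Matrix.mulVec_mulVec, ih, Matrix.mulVec_smul, hev,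
        smul_smul, pow_succ', mul_comm lam (lam ^ k)]
  set M : Matrix (Fin n) (Fin n) ℝ := fun i j => ((A ^ m) i j).re with hMdef
  have hM : ∀ i j, 0 ≤ M i j := fun i j => ((Complex.nonneg_iff.mp (hnonneg i j)).1)
  have hMA : ∀ i j, (A ^ m) i j = ((M i j : ℝ) : ℂ) := by
    intro i j
    have h := Complex.nonneg_iff.mp (hnonneg i j)
    exact Complex.ext (by simp [hMdef]) (by simp [hMdef, ← h.2])
  -- lam ^ m is the real number L ^ m
  have i0 : Fin n := ⟨0, hn⟩
  haveI : Nonempty (Fin n) := ⟨i0⟩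
  have hsum0 : ∀ i, ∑ j, (A ^ m) i j * xC j = lam ^ m * xC i := by
    intro i
    have := congrFun (hpow m) i
    simpa [Matrix.mulVec, dotProduct, Pi.smul_apply, smul_eq_mul] using this
  have hlamm : lam ^ m = ((L ^ m : ℝ) : ℂ) := by
    have h1 : lam ^ m * xC i0 = ((∑ j, M i0 j * x j : ℝ) : ℂ) := by
      rw [← hsum0 i0]
      push_cast
      refine Finset.sum_congr rfl fun j _ => ?_
      rw [hMA]
    have hx0 : (xC i0) ≠ 0 := by
      simp only [hxC]
      exact_mod_cast (hx i0).ne'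
    have h2 : lam ^ m = ((((∑ j, M i0 j * x j : ℝ)) / x i0 : ℝ) : ℂ) := by
      rw [Complex.ofReal_div, ← h1]
      show lam ^ m = lam ^ m * xC i0 / xC i0
      rw [mul_div_assoc, div_self hx0, mul_one]
    have hRnn : 0 ≤ (∑ j, M i0 j * x j) / x i0 :=
      div_nonneg (Finset.sum_nonneg fun j _ => mul_nonneg (hM i0 j) (hx j).le) (hx i0).le
    have h3 : ‖lam ^ m‖ = L ^ m := by
      rw [norm_pow]
    rw [h2] at h3 ⊢
    rw [Complex.norm_real, Real.norm_eq_abs, _root_.abs_of_nonneg hRnn] at h3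
    rw [h3]
  -- key real identity
  have hkey : ∀ i, ∑ j, M i j * x j = L ^ m * x i := by
    intro i
    have h1 : ((∑ j, M i j * x j : ℝ) : ℂ) = ((L ^ m * x i : ℝ) : ℂ) := by
      push_cast
      rw [show ∑ j, (M i j : ℂ) * (x j : ℂ) = ∑ j, (A ^ m) i j * xC j from
        Finset.sum_congr rfl fun j _ => by rw [hMA]]
      rw [hsum0 i, hlamm]
      push_cast; ring
    exact_mod_cast h1
  -- basic bound for multiplication by A^m
  have habs : ∀ (v : Fin n → ℂ) (c : ℝ), (∀ j, ‖v j‖ ≤ c * x j) →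
      ∀ i, ‖((A ^ m).mulVec v) i‖ ≤ c * (L ^ m) * x i := by
    intro v c hv i
    have hc : 0 ≤ c := by
      have := (norm_nonneg (v i0)).trans (hv i0)
      nlinarith [hx i0]
    have h1 : ‖((A ^ m).mulVec v) i‖ ≤ ∑ j, M i j * ‖v j‖ := by
      rw [show ((A ^ m).mulVec v) i = ∑ j, (A ^ m) i j * v j from by
        simp [Matrix.mulVec, dotProduct]]
      refine (norm_sum_le _ _).trans (le_of_eq ?_)
      refine Finset.sum_congr rfl fun j _ => ?_
      rw [norm_mul, hMA, Complex.norm_real, Real.norm_eq_abs, _root_.abs_of_nonneg (hM i j)]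
    have h2 : ∑ j, M i j * ‖v j‖ ≤ ∑ j, M i j * (c * x j) :=
      Finset.sum_le_sum fun j _ => mul_le_mul_of_nonneg_left (hv j) (hM i j)
    have h3 : ∑ j, M i j * (c * x j) = c * (L ^ m) * x i := by
      rw [show ∑ j, M i j * (c * x j) = c * ∑ j, M i j * x j from by
        rw [Finset.mul_sum]; exact Finset.sum_congr rfl fun j _ => by ring]
      rw [hkey i]; ring
    linarith
  -- residue constants
  set c : ℕ → ℝ := fun r =>
    Finset.univ.sup' (Finset.univ_nonempty) fun j => ‖((A ^ r).mulVec y) j‖ / x j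
    with hcdef
  have hc0 : ∀ r j, ‖((A ^ r).mulVec y) j‖ ≤ c r * x j := by
    intro r j
    have h1 : ‖((A ^ r).mulVec y) j‖ / x j ≤ c r :=
      Finset.le_sup' (f := fun j => ‖((A ^ r).mulVec y) j‖ / x j)
        (Finset.mem_univ j)
    calc ‖((A ^ r).mulVec y) j‖
        = (‖((A ^ r).mulVec y) j‖ / x j) * x j :=
          (div_mul_cancel₀ _ (hx j).ne').symm
      _ ≤ c r * x j := mul_le_mul_of_nonneg_right h1 (hx j).le
  have hcnn : ∀ r, 0 ≤ c r := by
    intro r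
    refine le_trans ?_ (Finset.le_sup' (b := i0)
      (f := fun j => ‖((A ^ r).mulVec y) j‖ / x j) (Finset.mem_univ i0))
    exact div_nonneg (norm_nonneg _) (hx i0).le
  -- inductive bound
  have hind : ∀ r q i, ‖((A ^ (m * q + r)).mulVec y) i‖
      ≤ c r * (L ^ m) ^ q * x i := by
    intro r q
    induction q with
    | zero => intro i; simpa using hc0 r i
    | succ q ih =>
      intro i
      have hsplit : A ^ (m * (q + 1) + r) = A ^ m * A ^ (m * q + r) := by
        rw [← pow_add]; ring_nf
      rw [hsplit, ← Matrix.mulVec_mulVec]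
      have := habs ((A ^ (m * q + r)).mulVec y) (c r * (L ^ m) ^ q) ih i
      calc ‖((A ^ m).mulVec ((A ^ (m * q + r)).mulVec y)) i‖
          ≤ c r * (L ^ m) ^ q * (L ^ m) * x i := this
        _ = c r * (L ^ m) ^ (q + 1) * x i := by ring
  -- uniform bound
  set C : ℝ := Finset.sup' (Finset.range m) (Finset.nonempty_range_iff.mpr (by omega))
    (fun r => c r / L ^ r) with hCdef
  have hCb : ∀ k i, ‖((A ^ k).mulVec y) i‖ ≤ C * L ^ k * x i := by
    intro k i
    have hr : k % m < m := Nat.mod_lt _ (by omega)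
    have hk : m * (k / m) + k % m = k := Nat.div_add_mod k m
    have h1 := hind (k % m) (k / m) i
    rw [hk] at h1
    have h2 : c (k % m) * (L ^ m) ^ (k / m) ≤ C * L ^ k := by
      have hCk : c (k % m) / L ^ (k % m) ≤ C :=
        Finset.le_sup' (f := fun r => c r / L ^ r) (Finset.mem_range.mpr hr)
      have hLk : (L ^ m) ^ (k / m) = L ^ k / L ^ (k % m) := by
        rw [← pow_mul, eq_div_iff (by positivity), ← pow_add, hk]
      rw [hLk]
      calc c (k % m) * (L ^ k / L ^ (k % m)) = (c (k % m)) / L ^ (k % m) * L ^ k := by ring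
        _ ≤ C * L ^ k := mul_le_mul_of_nonneg_right hCk (by positivity)
    nlinarith [hx i, (norm_nonneg (((A ^ k).mulVec y) i))]
  have hCnn : 0 ≤ C := by
    refine le_trans ?_ (Finset.le_sup' (b := 0) (f := fun r => c r / L ^ r)
      (Finset.mem_range.mpr (by omega)))
    exact div_nonneg (hcnn 0) (by positivity)
  set X : ℝ := Finset.univ.sup' Finset.univ_nonempty x with hXdef
  have hXnn : 0 ≤ X := (hx i0).le.trans (Finset.le_sup' _ (Finset.mem_univ i0))
  set B : ℝ := C * X with hBdef
  have hBnn : 0 ≤ B := mul_nonneg hCnn hXnn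
  -- norm bound on the scaled iterates
  have hzb : ∀ k : ℕ, ‖(lam ^ k)⁻¹ • ((A ^ k).mulVec y)‖ ≤ B := by
    intro k
    rw [pi_norm_le_iff_of_nonneg hBnn]
    intro i
    rw [Pi.smul_apply, norm_smul]
    have h1 : ‖(lam ^ k)⁻¹‖ = (L ^ k)⁻¹ := by
      rw [norm_inv, norm_pow]
    rw [h1]
    have h2 : ‖((A ^ k).mulVec y) i‖ ≤ C * L ^ k * x i := hCb k i
    have h3 : x i ≤ X := Finset.le_sup' _ (Finset.mem_univ i)
    have h4 : (L ^ k)⁻¹ * ‖((A ^ k).mulVec y) i‖ ≤ (L ^ k)⁻¹ * (C * L ^ k * x i) :=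
      mul_le_mul_of_nonneg_left h2 (by positivity)
    have h5 : (L ^ k)⁻¹ * (C * L ^ k * x i) = C * x i := by
      field_simp
    rw [h5] at h4
    exact h4.trans (by nlinarith)
  -- squeeze
  refine squeeze_zero_norm (a := fun k : ℕ => B / k) (fun k => ?_)
    (tendsto_const_div_atTop_nhds_zero_nat B)
  rw [norm_smul]
  have h1 : ‖((k : ℕ) : ℂ)⁻¹‖ = ((k : ℝ))⁻¹ := by
    rw [norm_inv]; simp
  rw [h1]
  show ((k : ℝ))⁻¹ * ‖(lam ^ k)⁻¹ • ((A ^ k).mulVec y)‖ ≤ B / (k : ℝ)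
  rw [div_eq_mul_inv, mul_comm B _]
  exact mul_le_mul_of_nonneg_left (hzb k) (by positivity)
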